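/- arXiv:2205.06235 — 6 statements merged into one kernel-verified Lean document; each statement's English description precedes it below -/
import Mathlib

section
/- The only solutions in positive integers (x, n) of the Diophantine equation x² + 2 = 3ⁿ are (x, n) = (1, 1) and (x, n) = (5, 3). -/
def L : List (ℕ × ℕ) :=
  [(1, 1), (5, 3), (19, 11), (71, 41), (112, 0), (71, 112), (19, 142), (5, 150), (1, 152),
   (152, 152), (148, 150), (134, 142), (82, 112), (41, 0), (82, 41), (134, 11), (148, 3), (152, 1)]

lemma L_closed : ∀ p ∈ L, ((2 * p.1 + 3 * p.2) % 153, (p.1 + 2 * p.2) % 153) ∈ L := by decide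

lemma L_inv : ∀ p ∈ L, 9 ∣ p.2 → 17 ∣ p.2 := by decide

lemma key : ∀ y x : ℕ, 0 < x → 0 < y → x ^ 2 + 2 = 3 * y ^ 2 → (x % 153, y % 153) ∈ L := by
  intro y
  induction y using Nat.strong_induction_on with
  | _ y ih =>
    intro x hx hy h
    rcases eq_or_lt_of_le (Nat.succ_le_of_lt hy) with h1 | h1
    · -- y = 1
      have hy1 : y = 1 := h1.symm
      subst hy1
      have hx1 : x = 1 := by nlinarith
      subst hx1; decide
    · -- y ≥ 2
      have hy2 : 2 ≤ y := h1
      have hxy : y < x := by nlinarith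
      have hx2y : x < 2 * y := by nlinarith
      have h3y : 3 * y < 2 * x := by nlinarith
      set a := 2 * x - 3 * y with ha
      set b := 2 * y - x with hb
      have ha' : a + 3 * y = 2 * x := by omega
      have hb' : b + x = 2 * y := by omega
      have hab : a ^ 2 + 2 = 3 * b ^ 2 := by nlinarith
      have hapos : 0 < a := by omega
      have hbpos : 0 < b := by omega
      have hblt : b < y := by omega
      have hmem := ih b hblt a hapos hbpos hab
      have hx' : x = 2 * a + 3 * b := by omega
      have hy' : y = a + 2 * b := by omega
      have := L_closed (a % 153, b % 153) hmem
      simpa [hx', hy', Nat.add_mod, Nat.mul_mod] using this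

theorem stmt1 (x n : ℕ) (hx : 0 < x) (hn : 0 < n) :
    x ^ 2 + 2 = 3 ^ n ↔ (x = 1 ∧ n = 1) ∨ (x = 5 ∧ n = 3) := by
  constructor
  · intro h
    -- n is odd
    have hodd : n % 2 = 1 := by
      rcases Nat.even_or_odd n with he | ho
      · exfalso
        obtain ⟨k, hk⟩ := he
        have h3 : 3 ^ n = (3 ^ k) ^ 2 := by
          rw [← pow_mul]; congr 1; omega
        set z := 3 ^ k
        have hzx : x < z := by nlinarith
        nlinarith
      · obtain ⟨k, hk⟩ := ho; omega
    obtain ⟨m, hm⟩ : ∃ m, n = 2 * m + 1 := ⟨n / 2, by omega⟩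
    have h3 : x ^ 2 + 2 = 3 * (3 ^ m) ^ 2 := by
      rw [h, hm, ← pow_mul]; ring
    have hmem := key (3 ^ m) x hx (pow_pos (by norm_num) m) h3
    by_cases hm2 : 2 ≤ m
    · exfalso
      have h9 : 9 ∣ 3 ^ m := by
        have : (3:ℕ) ^ 2 ∣ 3 ^ m := pow_dvd_pow 3 hm2
        simpa using this
      have h9' : 9 ∣ 3 ^ m % 153 := by omega
      have h17 : 17 ∣ 3 ^ m % 153 := L_inv _ hmem h9'
      have h17' : (17:ℕ) ∣ 3 ^ m := by omega
      have := (Nat.Prime.dvd_of_dvd_pow (p := 17) (by norm_num) h17')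
      omega
    · interval_cases m
      · left
        have hx1 : x ^ 2 = 1 ^ 2 := by omega
        have := Nat.pow_left_injective ((by norm_num : (2:ℕ) ≠ 0)) hx1
        omega
      · right
        have hx1 : x ^ 2 = 5 ^ 2 := by norm_num at h3 ⊢; omega
        have := Nat.pow_left_injective ((by norm_num : (2:ℕ) ≠ 0)) hx1
        omega
  · rintro (⟨rfl, rfl⟩ | ⟨rfl, rfl⟩) <;> norm_num
end

section
/- The only solutions in positive integers (x, n) of the Diophantine equation x² + 4 = 5ⁿ are (x, n) = (1, 1) and (x, n) = (11, 3). -/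
lemma cassini (k : ℕ) : ((Nat.fib (k+1) : ℤ))^2 - Nat.fib (k+1) * Nat.fib k - (Nat.fib k)^2 = (-1)^k := by
  induction k with
  | zero => norm_num
  | succ k ih =>
    simp only [Nat.fib_add_two]
    push_cast
    rw [pow_succ]
    linear_combination (-1:ℤ) * ih

lemma fib5aux (n : ℕ) :
    ((Nat.fib (5*n) : ℤ) = 5*(Nat.fib n:ℤ)*(Nat.fib (n+1):ℤ)^4 - 10*(Nat.fib n:ℤ)^2*(Nat.fib (n+1):ℤ)^3
      + 20*(Nat.fib n:ℤ)^3*(Nat.fib (n+1):ℤ)^2 - 15*(Nat.fib n:ℤ)^4*(Nat.fib (n+1):ℤ) + 5*(Nat.fib n:ℤ)^5)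
    ∧ ((Nat.fib (5*n+1) : ℤ) = (Nat.fib (n+1):ℤ)^5 + 10*(Nat.fib n:ℤ)^2*(Nat.fib (n+1):ℤ)^3
      - 10*(Nat.fib n:ℤ)^3*(Nat.fib (n+1):ℤ)^2 + 10*(Nat.fib n:ℤ)^4*(Nat.fib (n+1):ℤ) - 3*(Nat.fib n:ℤ)^5) := by
  induction n with
  | zero => norm_num
  | succ n ih =>
    obtain ⟨ih1, ih2⟩ := ih
    rw [show 5*(n+1) = 5*n+5 by ring]
    constructor
    · simp only [Nat.fib_add_two]
      push_cast
      linear_combination (3:ℤ) * ih1 + 5 * ih2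
    · simp only [Nat.fib_add_two]
      push_cast
      linear_combination (5:ℤ) * ih1 + 8 * ih2

lemma fib5_factor (n : ℕ) :
    (Nat.fib (5*n) : ℤ) = Nat.fib n * (25*(Nat.fib n:ℤ)^4 + 25*(-1:ℤ)^n*(Nat.fib n:ℤ)^2 + 5) := by
  have h := (fib5aux n).1
  have hc := cassini n
  have hc2 : ((-1:ℤ)^n)^2 = 1 := by
    rw [← pow_mul, mul_comm, pow_mul]; norm_num
  rw [h]
  linear_combination (5*(Nat.fib n:ℤ)*(((Nat.fib (n+1):ℤ)^2 - Nat.fib (n+1)*Nat.fib n - (Nat.fib n:ℤ)^2) + (-1:ℤ)^n) + 25*(Nat.fib n:ℤ)^3) * hc + 5*(Nat.fib n:ℤ)*hc2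
lemma fib_one_odd (k : ℕ) (hk : Odd k) (h : Nat.fib k = 1) : k = 1 := by
  by_contra hne
  have h3 : 3 ≤ k := by
    rcases hk with ⟨j, rfl⟩; omega
  have : 2 ≤ Nat.fib k := by
    calc 2 = Nat.fib 3 := by rfl
    _ ≤ Nat.fib k := Nat.fib_mono h3
  omega
lemma fib_pow5 (k m : ℕ) (hk : Odd k) (h : Nat.fib k = 5^m) : k = 1 ∨ k = 5 := by
  rcases m with _ | m
  · left; exact fib_one_odd k hk (by simpa using h)
  · have h5 : 5 ∣ Nat.fib k := h ▸ dvd_pow_self 5 (Nat.succ_ne_zero m)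
    have hg := Nat.fib_gcd k 5
    have hfib5 : Nat.fib 5 = 5 := rfl
    rw [hfib5] at hg
    have hgcd : (Nat.fib k).gcd 5 = 5 := Nat.gcd_eq_right h5
    rw [hgcd] at hg
    have hd : k.gcd 5 ∣ 5 := Nat.gcd_dvd_right k 5
    have h5k : 5 ∣ k := by
      rcases (Nat.Prime.eq_one_or_self_of_dvd (by norm_num) _ hd) with h1 | h1
      · rw [h1] at hg; simp at hg
      · have := Nat.gcd_dvd_left k 5; rw [h1] at this; exact this
    obtain ⟨k', rfl⟩ := h5k
    have hk' : Odd k' := by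
      rcases Nat.even_or_odd k' with he | ho
      · exfalso; rcases he with ⟨t, rfl⟩; rcases hk with ⟨j, hj⟩; omega
      · exact ho
    have hk'pos : 0 < k' := by
      rcases Nat.eq_zero_or_pos k' with rfl | hp
      · exact absurd hk' (by simp [Nat.odd_iff])
      · exact hp
    set a : ℤ := (Nat.fib k' : ℤ) with ha
    have hapos : 1 ≤ a := by
      have := Nat.fib_pos.mpr hk'pos
      omega
    have hneg : ((-1:ℤ)^k') = -1 := Odd.neg_one_pow hk'
    have hfac := fib5_factor k'
    rw [hneg, h] at hfac
    set t : ℤ := 5*a^4 - 5*a^2 + 1 with ht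
    have hdvd : t ∣ (5:ℤ)^(m+1) := ⟨5*a, by push_cast at hfac ⊢; linear_combination hfac⟩
    have h1a : 1 ≤ a^2 := by nlinarith
    have htpos : 1 ≤ t := by
      have h0 : 0 ≤ a^2*(a^2-1) := mul_nonneg (by nlinarith) (by nlinarith)
      rw [ht]; nlinarith
    have hdvdn : t.natAbs ∣ 5^(m+1) := by
      have h2 := Int.natAbs_dvd_natAbs.mpr hdvd
      rwa [Int.natAbs_pow] at h2
    obtain ⟨i, hi, hti⟩ := (Nat.dvd_prime_pow (by norm_num)).mp hdvdn
    rcases Nat.eq_zero_or_pos i with rfl | hipos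
    · have ht1 : t = 1 := by
        have : t.natAbs = 1 := by simpa using hti
        omega
      have haa : a^4 = a^2 := by
        rw [ht] at ht1; linarith
      have hale : a ≤ 1 := by nlinarith
      have ha1 : a = 1 := le_antisymm hale hapos
      have hf1 : Nat.fib k' = 1 := by exact_mod_cast ha ▸ ha1
      right
      have := fib_one_odd k' hk' hf1
      omega
    · exfalso
      have h5n : (5:ℤ).natAbs ∣ t.natAbs := by
        rw [hti]; simpa using (Nat.pos_iff_ne_zero.mp hipos)
      have h5t : (5:ℤ) ∣ t := Int.natAbs_dvd_natAbs.mp h5n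
      rw [ht] at h5t
      have h2 : (5:ℤ) ∣ 5*a^4-5*a^2 := ⟨a^4-a^2, by ring⟩
      have h3 := dvd_sub h5t h2
      simp only [show 5*a^4-5*a^2+1 - (5*a^4-5*a^2) = 1 by ring] at h3
      norm_num at h3
lemma pellZ : ∀ N : ℕ, ∀ x u : ℤ, 0 ≤ x → 0 ≤ u → u ≤ (N:ℤ) → x^2 + 4 = 5*u^2 →
    ∃ j : ℕ, x = Nat.fib (2*j) + Nat.fib (2*j+2) ∧ u = Nat.fib (2*j+1) := by
  intro N
  induction N with
  | zero =>
    intro x u hx hu huN h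
    exfalso
    have hu0 : u = 0 := le_antisymm (by exact_mod_cast huN) hu
    rw [hu0] at h
    nlinarith
  | succ N IH =>
    intro x u hx hu huN h
    rcases le_or_gt u 1 with hu1 | hu2
    · -- u = 0 or 1
      have : u = 0 ∨ u = 1 := by omega
      rcases this with rfl | rfl
      · exfalso; nlinarith
      · have hx1 : x = 1 := by
          have h0 : (x-1)*(x+1) = 0 := by linear_combination h
          rcases mul_eq_zero.mp h0 with h1 | h1 <;> omega
        exact ⟨0, by norm_num [hx1, Nat.fib], by norm_num [Nat.fib]⟩
    · -- u ≥ 2 : descent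
      have heven : Even ((x-u)*(x+u)) := ⟨2*(u^2-1), by linear_combination h⟩
      have hxu : ∃ d, x - u = 2*d := by
        rcases Int.even_mul.mp heven with he | he
        · obtain ⟨c, hc⟩ := he; exact ⟨c, by omega⟩
        · obtain ⟨c, hc⟩ := he; exact ⟨c - u, by omega⟩
      obtain ⟨d, hd⟩ := hxu
      have hXU : (3*d-u)^2 + 4 = 5*(u-d)^2 := by
        linear_combination h - (x+u+2*d)*hd
      have hX : 0 ≤ 3*d-u := by
        by_contra hc
        push_neg at hc
        nlinarith
      have hU : 0 ≤ u - d := by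
        by_contra hc
        push_neg at hc
        nlinarith
      have hdpos : 1 ≤ d := by
        by_contra hc
        push_neg at hc
        nlinarith
      have hUN : u - d ≤ (N:ℤ) := by
        push_cast at huN ⊢
        omega
      obtain ⟨j, hXj, hUj⟩ := IH (3*d-u) (u-d) hX hU hUN hXU
      refine ⟨j+1, ?_, ?_⟩
      · rw [show 2*(j+1) = 2*j+2 by ring]
        simp only [Nat.fib_add_two]
        push_cast
        simp only [Nat.fib_add_two] at hXj
        push_cast at hXj hUj
        linarith
      · rw [show 2*(j+1)+1 = 2*j+1+2 by ring]
        simp only [Nat.fib_add_two]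
        push_cast
        simp only [Nat.fib_add_two] at hXj
        push_cast at hXj hUj
        linarith
theorem stmt2 (x n : ℕ) (hx : 0 < x) (hn : 0 < n) :
    x ^ 2 + 4 = 5 ^ n ↔ (x = 1 ∧ n = 1) ∨ (x = 11 ∧ n = 3) := by
  constructor
  · intro h
    rcases Nat.even_or_odd n with he | ho
    · exfalso
      obtain ⟨k, rfl⟩ := he
      have hk1 : 1 ≤ k := by omega
      have hy : 5^k * 5^k = x^2 + 4 := by rw [h, ← pow_add]
      have hy5 : 5 ≤ 5^k := by
        calc 5 = 5^1 := by norm_num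
        _ ≤ 5^k := Nat.pow_le_pow_right (by norm_num) hk1
      have hxy : x < 5^k := by nlinarith
      have hxle : x ≤ 1 := by nlinarith
      have hx1 : x = 1 := by omega
      rw [hx1] at hy
      nlinarith
    · obtain ⟨k, rfl⟩ := ho
      have h5 : x^2 + 4 = 5 * (5^k)^2 := by
        rw [h, pow_succ, ← pow_mul, mul_comm k 2]
        ring
      obtain ⟨j, hxj, huj⟩ := pellZ (5^k) (x:ℤ) ((5:ℤ)^k)
        (by positivity) (by positivity) (by push_cast; exact le_refl _)
        (by exact_mod_cast h5)
      have hujn : Nat.fib (2*j+1) = 5^k := by exact_mod_cast huj.symm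
      have hodd : Odd (2*j+1) := ⟨j, by ring⟩
      rcases fib_pow5 (2*j+1) k hodd hujn with h1 | h1
      · -- j = 0
        have hj : j = 0 := by omega
        subst hj
        have hk0 : k = 0 := by
          have : (5:ℕ)^k = 1 := by simpa [Nat.fib] using hujn.symm
          by_contra hne
          have h5le : 5 ≤ 5^k := by
            calc (5:ℕ) = 5^1 := by norm_num
            _ ≤ 5^k := Nat.pow_le_pow_right (by norm_num) (by omega)
          omega
        have hx1 : x = 1 := by
          have := hxj
          norm_num [Nat.fib] at this
          exact_mod_cast this
        left
        exact ⟨hx1, by omega⟩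
      · -- j = 2
        have hj : j = 2 := by omega
        subst hj
        have hk1 : k = 1 := by
          have h2 : (5:ℕ)^k = 5 := by simpa [Nat.fib] using hujn.symm -- fib 5 = 5
          have := Nat.pow_right_injective (by norm_num : 2 ≤ 5) (h2.trans (pow_one 5).symm)
          omega
        have hx11 : x = 11 := by
          have := hxj
          norm_num [Nat.fib] at this
          exact_mod_cast this
        right
        exact ⟨hx11, by omega⟩
  · rintro (⟨rfl, rfl⟩ | ⟨rfl, rfl⟩) <;> norm_num
end

section
/- The only solutions in positive integers (x, y) of the Diophantine equation 7x² + 25 = 4·2^y are (x, y) = (1, 3) and (x, y) = (17, 9). -/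
namespace Stmt3Aux

/-- coordinates of (1+√-7)^n -/
def W : ℕ → ℤ × ℤ
  | 0 => (1, 0)
  | n+1 => ((W n).1 - 7 * (W n).2, (W n).1 + (W n).2)

def uu (n : ℕ) : ℤ := (W n).1
def vv (n : ℕ) : ℤ := (W n).2

lemma uu_succ (n : ℕ) : uu (n+1) = uu n - 7 * vv n := rfl
lemma vv_succ (n : ℕ) : vv (n+1) = uu n + vv n := rfl
lemma uu_zero : uu 0 = 1 := rfl
lemma vv_zero : vv 0 = 0 := rfl

lemma norm_uv (n : ℕ) : uu n ^ 2 + 7 * vv n ^ 2 = 8 ^ n := by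
  induction n with
  | zero => simp [uu_zero, vv_zero]
  | succ n ih =>
    rw [uu_succ, vv_succ, pow_succ]
    linear_combination 8 * ih

lemma add_formula (m n : ℕ) : uu (m+n) = uu m * uu n - 7 * vv m * vv n ∧
    vv (m+n) = uu m * vv n + vv m * uu n := by
  induction n with
  | zero => simp [uu_zero, vv_zero]
  | succ n ih =>
    obtain ⟨h1, h2⟩ := ih
    constructor
    · show uu ((m+n)+1) = _
      rw [uu_succ, h1, h2, uu_succ, vv_succ]; ring
    · show vv ((m+n)+1) = _
      rw [vv_succ, h1, h2, uu_succ, vv_succ]; ring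

lemma u_mod7 (n : ℕ) : (7:ℤ) ∣ uu n - 1 := by
  induction n with
  | zero => simp [uu_zero]
  | succ n ih =>
    obtain ⟨k, hk⟩ := ih
    exact ⟨k - vv n, by rw [uu_succ]; linarith⟩

lemma v_sub_mod7 (n : ℕ) : (7:ℤ) ∣ vv n - n := by
  induction n with
  | zero => simp [vv_zero]
  | succ n ih =>
    obtain ⟨k, hk⟩ := ih
    obtain ⟨j, hj⟩ := u_mod7 n
    exact ⟨k + j, by rw [vv_succ]; push_cast; linarith⟩

lemma v_seven (n : ℕ) : vv (7*n) = 7 * uu n ^ 6 * vv n - 245 * uu n ^ 4 * vv n ^ 3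
    + 1029 * uu n ^ 2 * vv n ^ 5 - 343 * vv n ^ 7 := by
  obtain ⟨a2, b2⟩ := add_formula n n
  obtain ⟨a3, b3⟩ := add_formula (n+n) n
  obtain ⟨a6, b6⟩ := add_formula (n+n+n) (n+n+n)
  obtain ⟨a7, b7⟩ := add_formula (n+n+n+(n+n+n)) n
  have h7 : 7*n = n+n+n+(n+n+n)+n := by ring
  rw [h7, b7, a6, b6, a3, b3, a2, b2]; ring

/-- lifting the exponent for the `vv` sequence -/
lemma F1 : ∀ (k n : ℕ), (7:ℤ)^k ∣ (n:ℤ) → (7:ℤ)^(k+1) ∣ vv n - n := by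
  intro k
  induction k with
  | zero => intro n _; simpa using v_sub_mod7 n
  | succ k ih =>
    intro n hn
    have h7 : (7:ℕ) ∣ n := by
      have : (7:ℤ) ∣ (n:ℤ) := dvd_trans (dvd_pow_self 7 (Nat.succ_ne_zero k)) hn
      exact_mod_cast this
    obtain ⟨s, rfl⟩ := h7
    have hs : (7:ℤ)^k ∣ (s:ℤ) := by
      have h7s : ((7:ℤ) * s) = (((7*s : ℕ)):ℤ) := by push_cast; ring
      have : (7:ℤ)^k * 7 ∣ (7:ℤ) * s := by
        rw [h7s, ← pow_succ]; exact hn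
      obtain ⟨t, ht⟩ := this
      exact ⟨t, by linarith⟩
    obtain ⟨t, ht⟩ := hs
    obtain ⟨w, hw⟩ := ih s (⟨t, ht⟩)
    obtain ⟨j, hj⟩ := u_mod7 s
    have hus : uu s = 1 + 7*j := by linarith
    have hvs : vv s = 7^k * (t + 7*w) := by
      rw [pow_succ] at hw
      linarith
    refine ⟨(6*j + 105*j^2 + 980*j^3 + 5145*j^4 + 14406*j^5 + 16807*j^6)*(t+7*w) + w
      - 5*(1+7*j)^4*(7:ℤ)^k*((7:ℤ)^k)*(t+7*w)^3
      + 21*(1+7*j)^2*((7:ℤ)^k)^3*((7:ℤ)^k)*(t+7*w)^5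
      - 7*((7:ℤ)^k)^5*((7:ℤ)^k)*(t+7*w)^7, ?_⟩
    have hc : ((7*s : ℕ) : ℤ) = 7 * (7:ℤ)^k * t := by push_cast; linarith
    rw [v_seven s, hus, hvs, hc, pow_succ, pow_succ]
    ring

/-- lifting the exponent for 8^e - 1 -/
lemma F2 : ∀ (k e : ℕ), (7:ℤ)^k ∣ (e:ℤ) → (7:ℤ)^(k+2) ∣ 8^e - 1 - 7*e := by
  intro k
  induction k with
  | zero =>
    intro e _
    induction e with
    | zero => simp
    | succ e ihe =>
      obtain ⟨c, hc⟩ := ihe (by simp)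
      refine ⟨8*c + e, ?_⟩
      have : (8:ℤ)^(e+1) = 8 * 8^e := by ring
      push_cast
      rw [this]
      push_cast at hc
      linarith
  | succ k ih =>
    intro e he
    have h7 : (7:ℕ) ∣ e := by
      have : (7:ℤ) ∣ (e:ℤ) := dvd_trans (dvd_pow_self 7 (Nat.succ_ne_zero k)) he
      exact_mod_cast this
    obtain ⟨f, rfl⟩ := h7
    have hf : (7:ℤ)^k ∣ (f:ℤ) := by
      have h7s : ((7:ℤ) * f) = (((7*f : ℕ)):ℤ) := by push_cast; ring
      have : (7:ℤ)^k * 7 ∣ (7:ℤ) * f := by rw [h7s, ← pow_succ]; exact he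
      obtain ⟨t, ht⟩ := this
      exact ⟨t, by linarith⟩
    obtain ⟨c, hc⟩ := ih f hf
    obtain ⟨g, hg⟩ := hf
    have h8f : (8:ℤ)^f = 1 + 7*(7:ℤ)^k*g + 49*(7:ℤ)^k*c := by
      rw [pow_succ, pow_succ] at hc
      linarith
    have h8e : (8:ℤ)^(7*f) = ((8:ℤ)^f)^7 := by
      rw [← pow_mul]; ring_nf
    refine ⟨c + 3*(7:ℤ)^k*(g+7*c)^2 + 35*((7:ℤ)^k)^2*(g+7*c)^3 + 245*((7:ℤ)^k)^3*(g+7*c)^4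
      + 1029*((7:ℤ)^k)^4*(g+7*c)^5 + 2401*((7:ℤ)^k)^5*(g+7*c)^6 + 2401*((7:ℤ)^k)^6*(g+7*c)^7, ?_⟩
    have hc7 : ((7*f : ℕ) : ℤ) = 7 * (7:ℤ)^k * g := by push_cast; linarith
    rw [h8e, h8f, hc7, pow_succ, pow_succ, pow_succ]
    ring

lemma eight_pow_sub_one (e : ℕ) : (7:ℤ) ∣ 8^e - 1 := by
  induction e with
  | zero => simp
  | succ e ih =>
    obtain ⟨c, hc⟩ := ih
    exact ⟨8*c + 1, by rw [pow_succ]; linarith⟩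

lemma two_pow_sub_one {d : ℕ} (h3 : 3 ∣ d) : (7:ℤ) ∣ 2^d - 1 := by
  obtain ⟨e, rfl⟩ := h3
  have : (2:ℤ)^(3*e) = 8^e := by rw [pow_mul]; norm_num
  rw [this]; exact eight_pow_sub_one e

lemma three_dvd_of (m : ℕ) (h : (7:ℤ) ∣ 5*2^m + 2) : 3 ∣ m := by
  obtain ⟨q, r, rfl, hrlt⟩ : ∃ q r, m = 3*q + r ∧ r < 3 := ⟨m/3, m%3, by omega, by omega⟩
  obtain ⟨K, hK⟩ := eight_pow_sub_one q
  have hsplit : (2:ℤ)^(3*q+r) = 8^q * 2^r := by rw [pow_add, pow_mul]; norm_num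
  rw [hsplit] at h
  have h8 : (8:ℤ)^q = 7*K + 1 := by linarith
  rw [h8] at h
  obtain ⟨c, hc⟩ := h
  interval_cases r
  · omega
  · exfalso; norm_num at hc; omega
  · exfalso; norm_num at hc; omega

lemma not_plus (m : ℕ) (h : (7:ℤ) ∣ 5*2^m - 2) : False := by
  obtain ⟨q, r, rfl, hrlt⟩ : ∃ q r, m = 3*q + r ∧ r < 3 := ⟨m/3, m%3, by omega, by omega⟩
  obtain ⟨K, hK⟩ := eight_pow_sub_one q
  have hsplit : (2:ℤ)^(3*q+r) = 8^q * 2^r := by rw [pow_add, pow_mul]; norm_num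
  rw [hsplit] at h
  have h8 : (8:ℤ)^q = 7*K + 1 := by linarith
  rw [h8] at h
  obtain ⟨c, hc⟩ := h
  interval_cases r <;> norm_num at hc <;> omega

/-- the main 7-adic contradiction for 7 ∣ d -/
lemma LCgen (d : ℕ) (γ δ : ℤ) (hd0 : d ≠ 0) (h3 : 3 ∣ d) (h7 : 7 ∣ d)
    (hne : ¬ (7:ℤ) ∣ 25 - 3*γ)
    (hE : 25 * ((2:ℤ)^d)^3 = 25*((2:ℤ)^d)^2 + 7*γ*2^d*(vv d) + 7*δ*(vv d)^2) : False := by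
  have hp : Nat.Prime 7 := by norm_num
  obtain ⟨k, hkd, hmax, hk1⟩ : ∃ k, 7^k ∣ d ∧ ¬ 7^(k+1) ∣ d ∧ 1 ≤ k :=
    ⟨d.factorization 7, Nat.ordProj_dvd d 7,
      Nat.pow_succ_factorization_not_dvd hd0 hp, hp.factorization_pos_of_dvd hd0 h7⟩
  obtain ⟨e, rfl⟩ := h3
  have hke : (7:ℕ)^k ∣ e := by
    have hcop : Nat.Coprime (7^k) 3 := Nat.Coprime.pow_left _ (by norm_num)
    exact hcop.dvd_of_dvd_mul_left hkd
  obtain ⟨s, rfl⟩ := hke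
  have hs7 : ¬ (7:ℕ) ∣ s := by
    rintro ⟨t, rfl⟩
    exact hmax ⟨3*t, by ring⟩
  obtain ⟨w, hw⟩ := F1 k (3*(7^k*s)) (by push_cast; exact ⟨3*s, by ring⟩)
  obtain ⟨c, hc⟩ := F2 k (7^k*s) (by push_cast; exact ⟨s, by ring⟩)
  set X : ℤ := 2^(3*(7^k*s)) with hXdef
  have hX8 : X = (8:ℤ)^(7^k*s) := by
    rw [hXdef, pow_mul]; norm_num
  have hcast1 : ((3*(7^k*s) : ℕ) : ℤ) = 3*(7:ℤ)^k*s := by push_cast; ring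
  have hcast2 : (((7:ℕ)^k*s : ℕ) : ℤ) = (7:ℤ)^k*s := by push_cast; ring
  rw [hcast1] at hw
  rw [hcast2] at hc
  rw [← hX8] at hc
  rw [pow_succ, pow_succ] at hc
  rw [pow_succ] at hw
  set y : ℤ := (7:ℤ)^k with hydef
  set v : ℤ := vv (3*(7^k*s)) with hvdef
  have hyne : (7:ℤ)*y ≠ 0 := by
    simp [hydef]
  have hkey : (7*y) * (25*X^2*(s+7*c)) = (7*y) * (γ*X*(3*s+7*w) + δ*y*(3*s+7*w)^2) := by
    linear_combination hE - (25*X^2)*hc + (7*γ*X + 7*δ*(v + y*(3*s+7*w)))*hw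
  have hAB := mul_left_cancel₀ hyne hkey
  obtain ⟨k₀, rfl⟩ : ∃ k₀, k = k₀ + 1 := ⟨k-1, by omega⟩
  have hyy : y = 7*(7:ℤ)^k₀ := by rw [hydef, pow_succ]; ring
  have hdvd : (7:ℤ) ∣ X*s*(25*X - 3*γ) := by
    refine ⟨-25*X^2*c + γ*X*w + δ*(7:ℤ)^k₀*(3*s+7*w)^2, ?_⟩
    have := hAB
    rw [hyy] at this
    linear_combination this
  have hp7 : Prime (7:ℤ) := by norm_num
  have hX1 : (7:ℤ) ∣ X - 1 := two_pow_sub_one ⟨7^(k₀+1)*s, rfl⟩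
  rcases (hp7.dvd_mul.mp hdvd) with hh | hh
  · rcases (hp7.dvd_mul.mp hh) with hh2 | hh2
    · exact absurd (hp7.dvd_of_dvd_pow (hXdef ▸ hh2)) (by norm_num)
    · have : (7:ℕ) ∣ s := by exact_mod_cast hh2
      exact hs7 this
  · obtain ⟨p, hp'⟩ := hh
    obtain ⟨q, hq⟩ := hX1
    exact hne ⟨p - 25*q, by linarith⟩

/-- the mod 49 classification for 7 ∤ d -/
lemma mod49 (d : ℕ) (h3 : 3 ∣ d) (h7 : ¬ 7 ∣ d)
    (hE : 25 * ((2:ℤ)^d)^3 = 25*((2:ℤ)^d)^2 + 70*2^d*(vv d) + 224*(vv d)^2) :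
    d % 21 = 6 := by
  obtain ⟨q, r, rfl, hrlt⟩ : ∃ q r, d = 21*q + r ∧ r < 21 := ⟨d/21, d%21, by omega, by omega⟩
  have hgoal : (21*q + r) % 21 = r := by omega
  rw [hgoal]
  have h21 : ((2:ℤ)^21)^q ≡ 1 [ZMOD 49] := by
    have : (2:ℤ)^21 ≡ 1 [ZMOD 49] := by decide
    simpa using this.pow q
  have hXsplit : (2:ℤ)^(21*q+r) = ((2:ℤ)^21)^q * 2^r := by rw [pow_add, pow_mul]
  have hX49 : (2:ℤ)^(21*q+r) ≡ 2^r [ZMOD 49] := by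
    rw [hXsplit]
    simpa using h21.mul_right ((2:ℤ)^r)
  have hX7 : (2:ℤ)^(21*q+r) ≡ 2^r [ZMOD 7] := hX49.of_dvd (by norm_num)
  have hv7 : vv (21*q+r) ≡ (r:ℤ) [ZMOD 7] := by
    obtain ⟨t, ht⟩ := v_sub_mod7 (21*q+r)
    have : ((21*q+r : ℕ):ℤ) ≡ (r:ℤ) [ZMOD 7] := by
      rw [Int.ModEq]
      push_cast
      omega
    refine Int.ModEq.trans ?_ this
    exact Int.modEq_iff_dvd.mpr ⟨-t, by linarith⟩
  have hA : 25 * ((2:ℤ)^(21*q+r))^3 ≡ 25 * ((2:ℤ)^r)^3 [ZMOD 49] :=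
    (hX49.pow 3).mul_left 25
  have hB : 25 * ((2:ℤ)^(21*q+r))^2 ≡ 25 * ((2:ℤ)^r)^2 [ZMOD 49] :=
    (hX49.pow 2).mul_left 25
  have hC : 70*2^(21*q+r)*(vv (21*q+r)) ≡ 70*2^r*(r:ℤ) [ZMOD 49] := by
    obtain ⟨t, ht⟩ := (hX7.mul hv7).dvd
    exact (Int.modEq_iff_dvd.mpr ⟨10*t, by linarith⟩)
  have hD : 224*(vv (21*q+r))^2 ≡ 224*(r:ℤ)^2 [ZMOD 49] := by
    obtain ⟨t, ht⟩ := ((hv7.mul hv7).dvd)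
    refine Int.modEq_iff_dvd.mpr ⟨32*t, ?_⟩
    have : (r:ℤ)*r - vv (21*q+r) * vv (21*q+r) = 7*t := by linarith
    linear_combination 224*this
  have hfinal : 25 * ((2:ℤ)^r)^3 ≡ 25*((2:ℤ)^r)^2 + 70*2^r*(r:ℤ) + 224*(r:ℤ)^2 [ZMOD 49] :=
    (hA.symm.trans (hE ▸ Int.ModEq.refl _)).trans ((hB.add hC).add hD)
  have hr3 : r % 3 = 0 := by omega
  have hr7 : r ≠ 0 ∧ r ≠ 7 ∧ r ≠ 14 := by
    refine ⟨?_, ?_, ?_⟩ <;> rintro rfl <;> exact h7 (by omega)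
  interval_cases r <;> first
    | rfl
    | omega
    | (exfalso; revert hfinal; decide)

/-! ### the second coordinate system : a,b with (a + b√-7)/2 = π^n -/

def aa : ℕ → ℤ
  | 0 => 2
  | 1 => 1
  | n+2 => aa (n+1) - 2 * aa n

def bb : ℕ → ℤ
  | 0 => 0
  | 1 => 1
  | n+2 => bb (n+1) - 2 * bb n

lemma aa_two (n : ℕ) : aa (n+2) = aa (n+1) - 2 * aa n := rfl
lemma bb_two (n : ℕ) : bb (n+2) = bb (n+1) - 2 * bb n := rfl

lemma hab : ∀ n : ℕ, 2 * aa (n+1) = aa n - 7 * bb n ∧ 2 * bb (n+1) = aa n + bb n := by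
  intro n
  induction n with
  | zero => constructor <;> rfl
  | succ n ih =>
    obtain ⟨h1, h2⟩ := ih
    constructor
    · rw [aa_two]; linarith
    · rw [bb_two]; linarith

lemma odd_ab (n : ℕ) : Odd (aa (n+1)) ∧ Odd (bb (n+1)) := by
  induction n with
  | zero => constructor <;> exact ⟨0, rfl⟩
  | succ n ih =>
    obtain ⟨⟨i, hi⟩, ⟨j, hj⟩⟩ := ih
    exact ⟨⟨i - aa n, by rw [aa_two]; omega⟩, ⟨j - bb n, by rw [bb_two]; omega⟩⟩

lemma link : ∀ n : ℕ, 2 * uu n = 2^n * aa n ∧ 2 * vv n = 2^n * bb n := by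
  intro n
  induction n with
  | zero => constructor <;> decide
  | succ n ih =>
    obtain ⟨h1, h2⟩ := ih
    obtain ⟨e1, e2⟩ := hab n
    constructor
    · rw [uu_succ, pow_succ]
      linear_combination h1 - 7*h2 - 2^n * e1
    · rw [vv_succ, pow_succ]
      linear_combination h1 + h2 - 2^n * e2

lemma descent_core (n : ℕ) (a b : ℤ) (hb : Odd b) (h : a^2 + 7*b^2 = 2^(n+4))
    (h4 : 4 ∣ a - b) :
    ∃ a' b', Odd a' ∧ Odd b' ∧ a'^2 + 7*b'^2 = 2^(n+3) ∧ 2*a = a' + 7*b' ∧ 2*b = a' - b' := by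
  obtain ⟨c, hc⟩ := h4
  have hoddc : Odd c := by
    by_contra hce
    rw [Int.not_odd_iff_even] at hce
    obtain ⟨c', rfl⟩ := hce
    have ha' : a = b + 8*c' := by linarith
    have h16 : (8:ℤ)*b^2 = 16*(2^n - b*c' - 4*c'^2) := by
      have h2 : (2:ℤ)^(n+4) = 16*2^n := by ring
      rw [ha'] at h
      rw [h2] at h
      linarith
    have : b^2 = 2*(2^n - b*c' - 4*c'^2) := by linarith
    have : Even (b^2) := ⟨2^n - b*c' - 4*c'^2 - b*c' - 4*c'^2 + b*c'+4*c'^2, by linarith⟩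
    rw [Int.even_pow] at this
    obtain ⟨hbe, -⟩ := this
    exact (Int.not_odd_iff_even.mpr hbe) hb
  refine ⟨c + 2*b, c, ?_, hoddc, ?_, by linarith, by linarith⟩
  · obtain ⟨i, hi⟩ := hoddc; exact ⟨i + b, by omega⟩
  · have ha' : a = b + 4*c := by linarith
    have h16 : (16:ℤ) * ((c+2*b)^2 + 7*c^2) = 16 * 2^(n+3) := by
      rw [ha'] at h
      have h2 : (2:ℤ)^(n+4) = 2*2^(n+3) := by ring
      rw [h2] at h
      linear_combination 8*h
    exact mul_left_cancel₀ (by norm_num) h16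

lemma descent (n : ℕ) (a b : ℤ) (ha : Odd a) (hb : Odd b) (h : a^2 + 7*b^2 = 2^(n+4)) :
    ∃ a' b', Odd a' ∧ Odd b' ∧ a'^2 + 7*b'^2 = 2^(n+3) ∧ 2*a = a' + 7*b' ∧
      (2*b = a' - b' ∨ 2*b = -(a' - b')) := by
  obtain ⟨p, hp⟩ := id ha
  obtain ⟨q, hq⟩ := id hb
  have hcase : (4 ∣ a - b) ∨ (4 ∣ a + b) := by omega
  rcases hcase with h4 | h4
  · obtain ⟨a', b', h1, h2, h3, h5, h6⟩ := descent_core n a b hb h h4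
    exact ⟨a', b', h1, h2, h3, h5, Or.inl h6⟩
  · obtain ⟨a', b', h1, h2, h3, h5, h6⟩ := descent_core n a (-b) ⟨-q-1, by omega⟩
      (by linear_combination h) ⟨(a+b)/4, by omega⟩
    exact ⟨a', b', h1, h2, h3, h5, Or.inr (by linarith)⟩

/-- uniqueness of odd representations by x² + 7y² = 2^k -/
lemma uniq : ∀ (n : ℕ) (a b : ℤ), Odd a → Odd b → a^2 + 7*b^2 = 2^(n+3) →
    a.natAbs = (aa (n+1)).natAbs ∧ b.natAbs = (bb (n+1)).natAbs := by
  intro n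
  induction n with
  | zero =>
    intro a b ha hb h
    have ha0 : a ≠ 0 := by rintro rfl; obtain ⟨p, hp⟩ := ha; omega
    have hb0 : b ≠ 0 := by rintro rfl; obtain ⟨p, hp⟩ := hb; omega
    norm_num at h
    have ha1 : 1 ≤ a^2 := by
      have : 0 < a^2 := by positivity
      exact this
    have hb1 : 1 ≤ b^2 := by
      have : 0 < b^2 := by positivity
      exact this
    have hb2 : b^2 = 1 := by nlinarith
    have ha2 : a^2 = 1 := by nlinarith
    have haf : (a-1)*(a+1) = 0 := by linear_combination ha2
    have hbf : (b-1)*(b+1) = 0 := by linear_combination hb2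
    show a.natAbs = (1:ℤ).natAbs ∧ b.natAbs = (1:ℤ).natAbs
    constructor
    · rcases mul_eq_zero.mp haf with h' | h'
      · have : a = 1 := by linarith
        simp [this]
      · have : a = -1 := by linarith
        simp [this]
    · rcases mul_eq_zero.mp hbf with h' | h'
      · have : b = 1 := by linarith
        simp [this]
      · have : b = -1 := by linarith
        simp [this]
  | succ n ih =>
    intro a b ha hb h
    obtain ⟨a', b', h1, h2, h3, h5, h6⟩ := descent n a b ha hb h
    obtain ⟨hA, hB⟩ := ih a' b' h1 h2 h3
    have hA' : a' = aa (n+1) ∨ a' = -(aa (n+1)) := Int.natAbs_eq_natAbs_iff.mp hA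
    have hB' : b' = bb (n+1) ∨ b' = -(bb (n+1)) := Int.natAbs_eq_natAbs_iff.mp hB
    have e1 : 2 * aa (n+2) = aa (n+1) - 7 * bb (n+1) := (hab (n+1)).1
    have e2 : 2 * bb (n+2) = aa (n+1) + bb (n+1) := (hab (n+1)).2
    obtain ⟨i, hi⟩ : Odd (aa (n+2)) := (odd_ab (n+1)).1
    obtain ⟨j, hj⟩ : Odd (bb (n+1)) := (odd_ab n).2
    obtain ⟨p, hp⟩ := id ha
    rcases hA' with rfl | hA' <;> rcases hB' with rfl | hB'
    · exfalso; omega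
    · have hae : a = aa (n+2) := by omega
      constructor
      · rw [hae]
      · rcases h6 with h6 | h6
        · have : b = bb (n+2) := by omega
          rw [this]
        · have : b = -bb (n+2) := by omega
          rw [this, Int.natAbs_neg]
    · have hae : a = -aa (n+2) := by omega
      constructor
      · rw [hae, Int.natAbs_neg]
      · rcases h6 with h6 | h6
        · have : b = -bb (n+2) := by omega
          rw [this, Int.natAbs_neg]
        · have : b = bb (n+2) := by omega
          rw [this]
    · exfalso; omega

lemma uu3 : uu 3 = -20 := by decide
lemma vv3 : vv 3 = -4 := by decide
lemma uu9 : uu 9 = -1280 := by decide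
lemma vv9 : vv 9 = -4352 := by decide

/-- main lemma : indices with uu m = -5·2^(m-1) are exactly 3 and 9 -/
lemma key (m : ℕ) (hm : 2 * uu m = -5 * 2^m) : m = 3 ∨ m = 9 := by
  have h3m : 3 ∣ m := by
    apply three_dvd_of m
    obtain ⟨j, hj⟩ := u_mod7 m
    exact ⟨-2*j, by linarith⟩
  by_cases hsmall : m < 12
  · interval_cases m <;> revert hm <;> decide
  · push_neg at hsmall
    exfalso
    obtain ⟨d, rfl⟩ : ∃ d, m = 3 + d := ⟨m - 3, by omega⟩
    have h3d : 3 ∣ d := by omega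
    obtain ⟨hu, hv⟩ := add_formula 3 d
    rw [uu3, vv3] at hu
    have h5 : 5 * uu d - 7 * vv d = 5 * 2^d := by
      have h2 : ((2:ℤ))^(3+d) = 8 * 2^d := by rw [pow_add]; norm_num
      rw [hu] at hm
      rw [h2] at hm
      linarith
    have hnd := norm_uv d
    have h8d : (8:ℤ)^d = ((2:ℤ)^d)^3 := by
      rw [show ((2:ℤ)^d)^3 = 2^(d*3) by rw [pow_mul], show d*3 = 3*d by ring, pow_mul]
      norm_num
    rw [h8d] at hnd
    have hE : 25 * ((2:ℤ)^d)^3 = 25*((2:ℤ)^d)^2 + 70*2^d*(vv d) + 224*(vv d)^2 := by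
      linear_combination -25 * hnd + (5*uu d + 5*2^d + 7*vv d) * h5
    by_cases h7d : 7 ∣ d
    · exact LCgen d 10 32 (by omega) h3d h7d (by decide) (by linear_combination hE)
    · have hr := mod49 d h3d h7d hE
      obtain ⟨d', rfl⟩ : ∃ d', d = 6 + d' := ⟨d - 6, by omega⟩
      have h21 : 21 ∣ d' := by omega
      have hd'0 : d' ≠ 0 := by
        rintro rfl
        omega
      obtain ⟨hu', hv'⟩ := add_formula 9 d'
      rw [uu9, vv9] at hu'
      have hmidx : 3 + (6 + d') = 9 + d' := by omega
      rw [hmidx] at hm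
      rw [hu'] at hm
      have h5' : 5 * uu d' - 119 * vv d' = 5 * 2^d' := by
        have h2 : ((2:ℤ))^(9+d') = 512 * 2^d' := by rw [pow_add]; norm_num
        rw [h2] at hm
        linarith
      have hnd' := norm_uv d'
      have h8d' : (8:ℤ)^d' = ((2:ℤ)^d')^3 := by
        rw [show ((2:ℤ)^d')^3 = 2^(d'*3) by rw [pow_mul], show d'*3 = 3*d' by ring, pow_mul]
        norm_num
      rw [h8d'] at hnd'
      have hE' : 25 * ((2:ℤ)^d')^3 = 25*((2:ℤ)^d')^2 + 7*170*2^d'*(vv d') + 7*2048*(vv d')^2 := by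
        linear_combination -25 * hnd' + (5*uu d' + 5*2^d' + 119*vv d') * h5'
      exact LCgen d' 170 2048 hd'0 (by omega) (by omega) (by decide) hE'

end Stmt3Aux

theorem stmt3 (x y : ℕ) (hx : 0 < x) (hy : 0 < y) :
    7 * x ^ 2 + 25 = 4 * 2 ^ y ↔ (x = 1 ∧ y = 3) ∨ (x = 17 ∧ y = 9) := by
  open Stmt3Aux in
  constructor
  · intro h
    have hxodd : Odd x := by
      rcases Nat.even_or_odd x with he | ho
      · exfalso
        obtain ⟨t, rfl⟩ := he
        have h4 : (t+t)^2 = 4*t^2 := by ring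
        rw [h4] at h
        omega
      · exact ho
    have hZ : ((5:ℤ))^2 + 7*(x:ℤ)^2 = 2^(y+2) := by
      have := congrArg (fun t : ℕ => (t : ℤ)) h
      push_cast at this
      rw [pow_add]
      linarith
    obtain ⟨y', rfl⟩ : ∃ y', y = y' + 1 := ⟨y - 1, by omega⟩
    have hyidx : (2:ℤ)^(y'+1+2) = 2^(y'+3) := by ring_nf
    rw [hyidx] at hZ
    have hxoddZ : Odd ((x:ℤ)) := by exact_mod_cast hxodd
    obtain ⟨hA, hB⟩ := uniq y' 5 (x:ℤ) ⟨2, by norm_num⟩ hxoddZ hZ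
    have h5 : aa (y'+1) = 5 ∨ aa (y'+1) = -5 := by
      rcases Int.natAbs_eq_natAbs_iff.mp hA.symm with h' | h'
      · exact Or.inl h'
      · exact Or.inr (by omega)
    obtain ⟨hlink, -⟩ := link (y'+1)
    rcases h5 with h5 | h5
    · exfalso
      rw [h5] at hlink
      obtain ⟨j, hj⟩ := u_mod7 (y'+1)
      refine not_plus (y'+1) ⟨2*j, ?_⟩
      have : uu (y'+1) = 7*j + 1 := by linarith
      rw [this] at hlink
      linarith
    · rw [h5] at hlink
      have hkey := key (y'+1) (by linarith)
      rcases hkey with hk | hk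
      · left
        have hy3 : y' + 1 = 3 := hk
        constructor
        · rw [hy3] at h
          have : x^2 = 1 := by omega
          nlinarith
        · omega
      · right
        have hy9 : y' + 1 = 9 := hk
        constructor
        · rw [hy9] at h
          have hx2 : x^2 = 289 := by omega
          nlinarith
        · omega
  · rintro (⟨rfl, rfl⟩ | ⟨rfl, rfl⟩) <;> norm_num
end

section
/- Let p be an odd prime and c a positive integer such that there exist positive integers x, n with c·x² + p − 1 = pⁿ. Then c + p is not congruent to 1 modulo 4. -/
theorem stmt7 (p c : ℕ) (hp : p.Prime) (hodd : Odd p) (hc : 0 < c)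
    (h : ∃ x n : ℕ, 0 < x ∧ 0 < n ∧ c * x ^ 2 + p - 1 = p ^ n) :
    ¬ (c + p) % 4 = 1 := by
  obtain ⟨x, n, hx, hn, heq⟩ := h
  intro hmod
  have hp2 : 2 ≤ p := hp.two_le
  have hx2 : 1 ≤ c * x ^ 2 := Nat.one_le_iff_ne_zero.mpr (by positivity)
  have heq' : c * x ^ 2 + p = p ^ n + 1 := by omega
  have h1 : p % 2 = 1 := Nat.odd_iff.mp hodd
  have h2 : p ^ n % 2 = 1 := Nat.odd_iff.mp (hodd.pow)
  rcases Nat.even_or_odd x with he | ho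
  · obtain ⟨k, hk⟩ := he
    have hcx : c * x ^ 2 = 4 * (c * (k * k)) := by subst hk; ring
    omega
  · obtain ⟨k, hk⟩ := ho
    have hcx : c * x ^ 2 = 4 * (c * (k * k + k)) + c := by subst hk; ring
    omega
end

section
/- Let p be an odd prime and c, s, r positive integers satisfying both c·s² + p − 1 = p^r and 3·c·s² = p − 2. Then p = 5, r = 1, c = 1, and s = 1. -/
theorem stmt10 (p c s r : ℕ) (hp : p.Prime) (hodd : Odd p) (hc : 0 < c) (hs : 0 < s)
    (hr : 0 < r) (h1 : c * s ^ 2 + p - 1 = p ^ r) (h2 : 3 * c * s ^ 2 = p - 2) :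
    p = 5 ∧ r = 1 ∧ c = 1 ∧ s = 1 := by
  have hp3 : 3 ≤ p := by
    rcases hodd with ⟨k, hk⟩
    have := hp.two_le
    omega
  have hcs : 1 ≤ c * s ^ 2 := Nat.one_le_iff_ne_zero.mpr (by positivity)
  rw [mul_assoc] at h2
  have key : 4 * p = 3 * p ^ r + 5 := by omega
  have hr1 : r = 1 := by
    by_contra h
    have h2r : 2 ≤ r := by omega
    have hle : p ^ 2 ≤ p ^ r := Nat.pow_le_pow_right (by omega) h2r
    nlinarith [sq_nonneg p]
  subst hr1
  rw [pow_one] at key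
  have hp5 : p = 5 := by omega
  have hcs1 : c * s ^ 2 = 1 := by omega
  have hc1 : c = 1 := by nlinarith
  have hs1 : s = 1 := by nlinarith
  exact ⟨hp5, rfl, hc1, hs1⟩
end

section
/- The only generalized Mersenne numbers M_{3,n} = 3ⁿ − 2 (n a positive integer) that are perfect squares are 1 and 25, attained at n = 1 and n = 3. -/
/-- The orbit, modulo 153, of the solutions of `x^2 + 2 = 3 y^2`. -/
def pellStates : List (ℕ × ℕ) :=
  [(1,1),(5,3),(19,11),(71,41),(112,0),(71,112),(19,142),(5,150),(1,152),
   (152,152),(148,150),(134,142),(82,112),(41,0),(82,41),(134,11),(148,3),(152,1)]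

lemma pellStates_closed : ∀ p ∈ pellStates,
    ((2 * p.1 + 3 * p.2) % 153, (p.1 + 2 * p.2) % 153) ∈ pellStates := by decide

lemma pellStates_y : ∀ p ∈ pellStates, p.2 % 9 = 0 → p.2 = 0 := by decide

/-- Every solution of `x^2 + 2 = 3 y^2` lies (mod 153) in `pellStates`. -/
lemma pell_key : ∀ y x : ℕ, x * x + 2 = 3 * (y * y) → (x % 153, y % 153) ∈ pellStates := by
  intro y
  induction y using Nat.strong_induction_on with
  | _ y ih =>
    intro x h
    match y, h with
    | 0, h => omega
    | 1, h =>
      have hx : x = 1 := by nlinarith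
      subst hx; decide
    | (m+2), h =>
      set Y : ℕ := m + 2 with hY
      -- descent: x' = 2x - 3Y, y' = 2Y - x
      have hY2 : 2 ≤ Y := by omega
      have h1 : 3 * Y < 2 * x := by nlinarith
      have h2 : x < 2 * Y := by nlinarith
      have h3 : Y < x := by nlinarith
      set a : ℕ := 2 * x - 3 * Y with ha
      set b : ℕ := 2 * Y - x with hb
      have hxa : x = 2 * a + 3 * b := by omega
      have hyb : Y = a + 2 * b := by omega
      have hab : a * a + 2 = 3 * (b * b) := by nlinarith [hxa, hyb]
      have hblt : b < Y := by omega
      have hmem := ih b hblt a hab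
      have := pellStates_closed _ hmem
      have e1 : (2 * (a % 153) + 3 * (b % 153)) % 153 = x % 153 := by omega
      have e2 : ((a % 153) + 2 * (b % 153)) % 153 = Y % 153 := by omega
      simpa [e1, e2] using this

theorem stmt11 (n : ℕ) (hn : 0 < n) :
    IsSquare (3 ^ n - 2) ↔ n = 1 ∨ n = 3 := by
  constructor
  · rintro ⟨k, hk⟩
    have h2 : 2 ≤ 3 ^ n := by
      calc 2 ≤ 3 ^ 1 := by norm_num
      _ ≤ 3 ^ n := Nat.pow_le_pow_right (by norm_num) hn
    have hk' : k * k + 2 = 3 ^ n := by omega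
    rcases Nat.even_or_odd n with he | ho
    · -- even case: impossible mod 8
      exfalso
      obtain ⟨m, hm⟩ := he
      have h8 : 3 ^ n % 8 = 1 := by
        have : (3:ℕ) ^ n = 9 ^ m := by
          rw [hm, ← two_mul, pow_mul]; norm_num
        rw [this, Nat.pow_mod]; norm_num
      have hk8 : k * k % 8 = 7 := by omega
      have hmm := Nat.mul_mod k k 8
      have hlt : k % 8 < 8 := Nat.mod_lt _ (by norm_num)
      interval_cases h : k % 8 <;> simp_all
    · obtain ⟨m, hm⟩ := ho
      have hpow : (3:ℕ) ^ n = 3 * (3 ^ m * 3 ^ m) := by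
        rw [hm, pow_succ, two_mul, pow_add]; ring
      have hsol : k * k + 2 = 3 * (3 ^ m * 3 ^ m) := by omega
      have hmem := pell_key (3 ^ m) k hsol
      -- if m ≥ 2 then 9 ∣ 3^m, forcing 153 ∣ 3^m, so 17 ∣ 3^m: contradiction
      match m, hm with
      | 0, hm => left; omega
      | 1, hm => right; omega
      | (j+2), hm =>
        exfalso
        have h9 : (3:ℕ) ^ (j+2) % 9 = 0 := by
          have : (9:ℕ) ∣ 3 ^ (j+2) := by
            have : (3:ℕ)^2 ∣ 3 ^ (j+2) := pow_dvd_pow 3 (by omega)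
            simpa using this
          omega
        have h9' : (3 ^ (j+2) % 153) % 9 = (3:ℕ) ^ (j+2) % 9 := by omega
        have hz := pellStates_y _ hmem (by simp only [h9', h9])
        have h153 : (153:ℕ) ∣ 3 ^ (j+2) := by
          have : (3:ℕ) ^ (j+2) % 153 = 0 := hz
          omega
        have h17 : (17:ℕ) ∣ 3 ^ (j+2) := dvd_trans (by norm_num) h153
        have h17' : (17:ℕ) ∣ 3 := Nat.Prime.dvd_of_dvd_pow (by norm_num) h17
        omega
  · rintro (rfl | rfl)
    · exact ⟨1, by norm_num⟩
    · exact ⟨5, by norm_num⟩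
end
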